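/- Let β be the arcsine law on [−2, 2], i.e. β(dy) = 1_{[−2,2]}(y) dy/(π·√(4−y²)). Then for every real x, ∫ log|x − y| β(dy) = 0 if |x| ≤ 2, and ∫ log|x − y| β(dy) = log((|x| + √(x² − 4))/2) if |x| > 2. -/

import Mathlib

open MeasureTheory Real

/-- The arcsine law on `[-2,2]`: density `1/(π √(4-y²))` w.r.t. Lebesgue measure. -/
noncomputable def arcsineLaw : Measure ℝ :=
  (volume.restrict (Set.Icc (-2 : ℝ) 2)).withDensity
    fun y => ENNReal.ofReal (1 / (π * Real.sqrt (4 - y ^ 2)))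

open MeasureTheory Real Set intervalIntegral

lemma quad_pos {s : ℝ} (hs : |s| < 1) (θ : ℝ) : 0 < 1 - 2 * s * Real.cos θ + s ^ 2 := by
  have h3 : s * Real.cos θ ≤ |s| := by
    calc s * Real.cos θ ≤ |s * Real.cos θ| := le_abs_self _
    _ = |s| * |Real.cos θ| := abs_mul _ _
    _ ≤ |s| * 1 := by gcongr; exact Real.abs_cos_le_one θ
    _ = |s| := mul_one _
  have h4 : s ^ 2 = |s| ^ 2 := (sq_abs s).symm
  have h5 : 0 < (1 - |s|) ^ 2 := by
    have : 0 < 1 - |s| := by linarith [abs_nonneg s]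
    positivity
  nlinarith

lemma pointwise_log_series {s θ : ℝ} (hs : |s| < 1) :
    HasSum (fun n : ℕ => (-2) * (s ^ n * Real.cos (n * θ) / n))
      (Real.log (1 - 2 * s * Real.cos θ + s ^ 2)) := by
  set z : ℂ := s * Complex.exp (θ * Complex.I) with hz
  have hznorm : ‖z‖ < 1 := by
    have : ‖Complex.exp (θ * Complex.I)‖ = 1 := Complex.norm_exp_ofReal_mul_I θ
    simp only [hz, norm_mul, this, mul_one, Complex.norm_real, Real.norm_eq_abs]
    exact hs
  have h := Complex.hasSum_taylorSeries_neg_log hznorm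
  have h2 := (Complex.reCLM.hasSum h).mul_left (-2 : ℝ)
  have hfun : (fun n : ℕ => (-2) * (s ^ n * Real.cos (n * θ) / n))
      = fun n : ℕ => -2 * Complex.reCLM (z ^ n / n) := by
    funext n
    have hzn : z ^ n = (s ^ n : ℝ) * Complex.exp ((n * θ : ℝ) * Complex.I) := by
      rw [hz, mul_pow, ← Complex.exp_nat_mul]
      push_cast
      ring_nf
    rw [Complex.reCLM_apply, hzn, Complex.div_natCast_re, Complex.re_ofReal_mul,
      Complex.exp_ofReal_mul_I_re]
  have habs : ‖1 - z‖ ^ 2 = 1 - 2 * s * Real.cos θ + s ^ 2 := by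
    rw [← Complex.normSq_eq_norm_sq, Complex.normSq_apply]
    simp only [hz, Complex.sub_re, Complex.sub_im, Complex.one_re, Complex.one_im]
    rw [Complex.re_ofReal_mul, Complex.im_ofReal_mul, Complex.exp_ofReal_mul_I_re,
      Complex.exp_ofReal_mul_I_im]
    nlinarith [Real.sin_sq_add_cos_sq θ]
  have hne : ‖1 - z‖ ≠ 0 := by
    intro h0
    rw [h0] at habs
    have := quad_pos hs θ
    nlinarith
  have hval : Real.log (1 - 2 * s * Real.cos θ + s ^ 2)
      = -2 * Complex.reCLM (-Complex.log (1 - z)) := by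
    rw [Complex.reCLM_apply, Complex.neg_re, Complex.log_re, ← habs, Real.log_pow]
    push_cast
    ring
  rw [hfun, hval]
  exact h2

lemma integral_cos_nmul (n : ℕ) (hn : 0 < n) : ∫ θ in (0:ℝ)..π, Real.cos (n * θ) = 0 := by
  have hc : (n : ℝ) ≠ 0 := Nat.cast_ne_zero.mpr hn.ne'
  rw [intervalIntegral.integral_comp_mul_left (f := Real.cos) hc]
  simp [Real.sin_nat_mul_pi]

lemma J_small {s : ℝ} (hs : |s| < 1) :
    ∫ θ in (0:ℝ)..π, Real.log (1 - 2 * s * Real.cos θ + s ^ 2) = 0 := by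
  set F : ℕ → ℝ → ℝ := fun n θ => (-2) * (s ^ n * Real.cos (n * θ) / n) with hF
  have hFi : ∀ n, Integrable (F n) (volume.restrict (Ioc (0:ℝ) π)) := by
    intro n
    apply Continuous.integrableOn_Ioc
    continuity
  have hFbound : ∀ n, ∫ θ in Ioc (0:ℝ) π, ‖F n θ‖ ≤ (2 * π) * |s| ^ n := by
    intro n
    have hb : ∀ θ ∈ Ioc (0:ℝ) π, ‖F n θ‖ ≤ 2 * |s| ^ n := by
      intro θ _
      rcases Nat.eq_zero_or_pos n with rfl | hn
      · simp [hF]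
      · have h1 : |Real.cos (n * θ)| ≤ 1 := Real.abs_cos_le_one _
        have h2 : (1:ℝ) ≤ n := by exact_mod_cast hn
        have hn0 : (0:ℝ) < n := by exact_mod_cast hn
        have heq : ‖F n θ‖ = 2 * (|s| ^ n * |Real.cos (n * θ)| / n) := by
          simp only [hF, Real.norm_eq_abs, abs_mul, abs_div, abs_pow, abs_neg, Nat.abs_cast]
          norm_num
        rw [heq]
        have : |s| ^ n * |Real.cos (↑n * θ)| / ↑n ≤ |s| ^ n := by
          rw [div_le_iff₀ hn0]
          calc |s| ^ n * |Real.cos (↑n * θ)| ≤ |s| ^ n * 1 := by gcongr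
          _ ≤ |s| ^ n * n := by nlinarith [pow_nonneg (abs_nonneg s) n]
        linarith
    calc ∫ θ in Ioc (0:ℝ) π, ‖F n θ‖ ≤ ∫ _ in Ioc (0:ℝ) π, 2 * |s| ^ n := by
          apply setIntegral_mono_on (hFi n).norm (integrableOn_const measure_Ioc_lt_top.ne) measurableSet_Ioc hb
    _ = (2 * |s| ^ n) * π := by
          simp [Real.pi_pos.le]
          ring
    _ ≤ (2 * π) * |s| ^ n := by ring_nf; exact le_refl _
  have hFsum : Summable fun n => ∫ θ in Ioc (0:ℝ) π, ‖F n θ‖ := by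
    apply Summable.of_nonneg_of_le
      (fun n => integral_nonneg fun θ => norm_nonneg _) hFbound
    exact (summable_geometric_of_lt_one (abs_nonneg s) hs).mul_left _
  have hswap := MeasureTheory.integral_tsum_of_summable_integral_norm hFi hFsum
  have hpt : ∀ θ, (∑' n, F n θ) = Real.log (1 - 2 * s * Real.cos θ + s ^ 2) :=
    fun θ => (pointwise_log_series hs).tsum_eq
  rw [intervalIntegral.integral_of_le Real.pi_pos.le]
  calc ∫ θ in Ioc (0:ℝ) π, Real.log (1 - 2 * s * Real.cos θ + s ^ 2)
      = ∫ θ in Ioc (0:ℝ) π, (∑' n, F n θ) := by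
        apply setIntegral_congr_fun measurableSet_Ioc
        intro θ _
        exact (hpt θ).symm
  _ = ∑' n, ∫ θ in Ioc (0:ℝ) π, F n θ := hswap.symm
  _ = 0 := by
        have hz : ∀ n, ∫ θ in Ioc (0:ℝ) π, F n θ = 0 := by
          intro n
          rcases Nat.eq_zero_or_pos n with rfl | hn
          · simp [hF]
          · have he : ∫ θ in Ioc (0:ℝ) π, F n θ
                = ∫ θ in (0:ℝ)..π, (-2 * s ^ n / n) * Real.cos (n * θ) := by
              rw [intervalIntegral.integral_of_le Real.pi_pos.le]
              apply setIntegral_congr_fun measurableSet_Ioc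
              intro θ _
              simp only [hF]
              ring
            rw [he, intervalIntegral.integral_const_mul, integral_cos_nmul n hn, mul_zero]
        simp [hz]


noncomputable def gfun (u : ℝ) : ℝ := Real.log (2 - 2 * Real.cos u)

lemma abslog_intOn : IntegrableOn (fun u => |Real.log u|) (Ioc (0:ℝ) π) volume := by
  have hrpow : IntegrableOn (fun u : ℝ => 7 * u ^ (-(1/2) : ℝ)) (Ioc (0:ℝ) π) volume := by
    have h := (intervalIntegrable_rpow' (a := 0) (b := π) (r := -(1/2)) (by norm_num)).def'
    rw [uIoc_of_le Real.pi_pos.le] at h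
    exact h.const_mul 7
  apply Integrable.mono hrpow (Real.measurable_log.abs.aestronglyMeasurable)
  rw [ae_restrict_iff' measurableSet_Ioc]
  apply Filter.Eventually.of_forall
  intro u hu
  have hu0 : 0 < u := hu.1
  have hsq : Real.sqrt u ≠ 0 := by positivity
  have hrw : u ^ (-(1/2) : ℝ) = (Real.sqrt u)⁻¹ := by
    rw [Real.rpow_neg hu0.le, Real.sqrt_eq_rpow]
  rw [Real.norm_eq_abs, Real.norm_eq_abs, abs_abs]
  have h7 : |7 * u ^ (-(1/2) : ℝ)| = 7 * (Real.sqrt u)⁻¹ := by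
    rw [hrw, abs_of_nonneg (by positivity)]
  rw [h7]
  rcases le_or_gt u 1 with h1 | h1
  · have hlogle : Real.log u ≤ 0 := Real.log_nonpos hu0.le h1
    rw [abs_of_nonpos hlogle]
    have hkey : Real.log ((Real.sqrt u)⁻¹) ≤ (Real.sqrt u)⁻¹ - 1 :=
      Real.log_le_sub_one_of_pos (by positivity)
    have hlogsqrt : Real.log ((Real.sqrt u)⁻¹) = -(Real.log u / 2) := by
      rw [Real.log_inv, Real.log_sqrt hu0.le]
    rw [hlogsqrt] at hkey
    have : (0:ℝ) < (Real.sqrt u)⁻¹ := by positivity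
    linarith
  · have hlogge : 0 ≤ Real.log u := Real.log_nonneg h1.le
    rw [abs_of_nonneg hlogge]
    have h2 : Real.log u ≤ u - 1 := Real.log_le_sub_one_of_pos hu0
    have h3 : u ≤ π := hu.2
    have h4 : Real.sqrt u ≤ 2 := by
      rw [show (2:ℝ) = Real.sqrt 4 by rw [show (4:ℝ) = 2^2 by norm_num, Real.sqrt_sq]; norm_num]
      exact Real.sqrt_le_sqrt (by linarith [Real.pi_le_four])
    have h5 : (0:ℝ) < Real.sqrt u := Real.sqrt_pos.mpr hu0
    have h6 : (7/2 : ℝ) ≤ 7 * (Real.sqrt u)⁻¹ := by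
      rw [le_mul_inv_iff₀ h5]
      linarith
    have : u - 1 ≤ 7/2 := by linarith [Real.pi_le_four]
    linarith

lemma gfun_even (u : ℝ) : gfun (-u) = gfun u := by simp [gfun]

lemma gfun_periodic : Function.Periodic gfun (2*π) := by
  intro u; simp [gfun, Real.cos_add_two_pi]

lemma gfun_intOn_0pi : IntervalIntegrable gfun volume 0 π := by
  rw [intervalIntegrable_iff, uIoc_of_le Real.pi_pos.le]
  have hmeas : AEStronglyMeasurable gfun (volume.restrict (Ioc (0:ℝ) π)) := by
    apply Measurable.aestronglyMeasurable
    exact Real.measurable_log.comp (by fun_prop)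
  have hbound : IntegrableOn
      (fun u => (Real.log 4 + 2 * Real.log π) + 2 * |Real.log u|) (Ioc (0:ℝ) π) volume := by
    apply Integrable.add (integrableOn_const measure_Ioc_lt_top.ne)
    exact abslog_intOn.const_mul 2
  apply Integrable.mono hbound hmeas
  rw [ae_restrict_iff' measurableSet_Ioc]
  apply Filter.Eventually.of_forall
  intro u hu
  have hu0 : 0 < u := hu.1
  have huπ : u ≤ π := hu.2
  -- bounds on 2 - 2 cos u
  have hsinsq : 2 - 2 * Real.cos u = 4 * Real.sin (u/2) ^ 2 := by
    have h := Real.sin_sq_eq_half_sub (u/2)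
    rw [show 2*(u/2) = u by ring] at h
    linarith
  have hsin_lb : u / π ≤ Real.sin (u/2) := by
    have := Real.mul_le_sin (x := u/2) (by linarith) (by linarith)
    calc u / π = 2 / π * (u/2) := by ring
    _ ≤ Real.sin (u/2) := this
  have hsin_pos : 0 < Real.sin (u/2) := lt_of_lt_of_le (by positivity) hsin_lb
  have hlb : 4 * (u/π)^2 ≤ 2 - 2 * Real.cos u := by
    rw [hsinsq]
    have : (u/π)^2 ≤ Real.sin (u/2)^2 := by
      apply sq_le_sq' (by linarith [div_pos hu0 Real.pi_pos]) hsin_lb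
    linarith
  have hub : 2 - 2 * Real.cos u ≤ 4 := by
    have := Real.neg_one_le_cos u
    linarith
  have hpos : 0 < 2 - 2 * Real.cos u := lt_of_lt_of_le (by positivity) hlb
  have hgub : gfun u ≤ Real.log 4 := by
    apply Real.log_le_log hpos hub
  have hglb : Real.log 4 + 2 * Real.log u - 2 * Real.log π ≤ gfun u := by
    have h1 : Real.log (4 * (u/π)^2) ≤ gfun u := Real.log_le_log (by positivity) hlb
    have h2 : Real.log (4 * (u/π)^2) = Real.log 4 + 2 * Real.log u - 2 * Real.log π := by
      rw [Real.log_mul (by norm_num) (by positivity), Real.log_pow,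
        Real.log_div hu0.ne' Real.pi_ne_zero]
      push_cast
      ring
    linarith
  have hlog4 : 0 ≤ Real.log 4 := Real.log_nonneg (by norm_num)
  have hlogπ : 0 ≤ Real.log π := Real.log_nonneg (by linarith [Real.two_le_pi])
  rw [Real.norm_eq_abs, Real.norm_eq_abs]
  rw [abs_of_nonneg (by positivity : (0:ℝ) ≤ Real.log 4 + 2*Real.log π + 2*|Real.log u|)]
  rw [abs_le]
  constructor
  · have := neg_abs_le (Real.log u)
    linarith
  · have := le_abs_self (Real.log u)
    nlinarith [abs_nonneg (Real.log u)]

lemma gfun_int_any {a b : ℝ} (ha : a ∈ Icc (-π) (2*π)) (hb : b ∈ Icc (-π) (2*π)) :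
    IntervalIntegrable gfun volume a b := by
  have h1 : IntervalIntegrable gfun volume (-π) 0 := by
    have h := gfun_intOn_0pi.comp_mul_left (c := -1)
    have he : (fun x => gfun (-1 * x)) = gfun := by
      funext x
      rw [show (-1:ℝ) * x = -x by ring, gfun_even]
    rw [he, show (0:ℝ) / -1 = 0 by norm_num, show π / -1 = -π by ring] at h
    exact h.symm
  have h2 : IntervalIntegrable gfun volume π (2*π) := by
    have h := h1.comp_sub_right (2*π)
    have he : (fun x => gfun (x - 2*π)) = gfun := by
      funext x
      simp [gfun, Real.cos_sub_two_pi]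
    rw [he] at h
    norm_num at h
    convert h using 2 <;> ring
  have hfull : IntervalIntegrable gfun volume (-π) (2*π) :=
    (h1.trans gfun_intOn_0pi).trans h2
  apply hfull.mono_set (uIcc_subset_uIcc ?_ ?_) <;>
    · rw [uIcc_of_le (by linarith [Real.pi_pos] : -π ≤ 2*π)]
      first | exact ha | exact hb

lemma cos_eq_one_null : volume {θ : ℝ | Real.cos θ = 1} = 0 := by
  have hc : {θ : ℝ | Real.cos θ = 1}.Countable := by
    apply Set.Countable.mono _ (Set.countable_range (fun n : ℤ => (n : ℝ) * (2*π)))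
    intro θ hθ
    rcases (Real.cos_eq_one_iff θ).mp hθ with ⟨n, hn⟩
    exact ⟨n, hn⟩
  exact hc.measure_zero volume

lemma cos_shift_null (c : ℝ) : volume {θ : ℝ | Real.cos (θ + c) = 1} = 0 := by
  have h := MeasureTheory.measure_preimage_add_right volume c {θ : ℝ | Real.cos θ = 1}
  rw [cos_eq_one_null] at h
  exact h

lemma integral_gfun_two_pi : ∫ u in (0:ℝ)..(2*π), gfun u = 0 := by
  have hπ : (0:ℝ) ≤ π := Real.pi_pos.le
  have hmem : ∀ c ∈ Icc (-π) (2*π), ∀ d ∈ Icc (-π) (2*π), IntervalIntegrable gfun volume c d :=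
    fun c hc d hd => gfun_int_any hc hd
  have h0π : (0:ℝ) ∈ Icc (-π) (2*π) := ⟨by linarith, by linarith⟩
  have hππ : π ∈ Icc (-π) (2*π) := ⟨by linarith, by linarith⟩
  have h2π : 2*π ∈ Icc (-π) (2*π) := ⟨by linarith, le_refl _⟩
  -- substitution u = 2θ
  have hsub : ∫ θ in (0:ℝ)..π, gfun (2*θ) = 2⁻¹ * ∫ u in (0:ℝ)..(2*π), gfun u := by
    rw [intervalIntegral.integral_comp_mul_left (f := gfun) (two_ne_zero)]
    norm_num
  -- a.e. identity gfun (2θ) = gfun θ + gfun (θ+π)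
  have hae : ∫ θ in (0:ℝ)..π, gfun (2*θ) = ∫ θ in (0:ℝ)..π, (gfun θ + gfun (θ+π)) := by
    apply intervalIntegral.integral_congr_ae
    have hnull : volume ({θ : ℝ | Real.cos θ = 1} ∪ {θ : ℝ | Real.cos (θ + π) = 1}) = 0 :=
      measure_union_null cos_eq_one_null (cos_shift_null π)
    rw [← MeasureTheory.compl_mem_ae_iff] at hnull
    filter_upwards [hnull] with θ hθ _
    simp only [Set.mem_compl_iff, Set.mem_union, Set.mem_setOf_eq, not_or] at hθ
    obtain ⟨h1, h2⟩ := hθ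
    have hc1 : Real.cos θ < 1 := lt_of_le_of_ne (Real.cos_le_one θ) h1
    have hc2 : Real.cos θ > -1 := by
      have := lt_of_le_of_ne (Real.cos_le_one (θ + π)) h2
      rw [Real.cos_add_pi] at this
      linarith
    have ha : (0:ℝ) < 2 - 2*Real.cos θ := by linarith
    have hb : (0:ℝ) < 2 + 2*Real.cos θ := by linarith
    have hprod : 2 - 2*Real.cos (2*θ) = (2 - 2*Real.cos θ) * (2 + 2*Real.cos θ) := by
      rw [Real.cos_two_mul]
      ring
    unfold gfun
    rw [Real.cos_add_pi, hprod, Real.log_mul ha.ne' hb.ne']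
    ring_nf
  -- split the sum
  have hsplit : ∫ θ in (0:ℝ)..π, (gfun θ + gfun (θ+π))
      = (∫ θ in (0:ℝ)..π, gfun θ) + ∫ θ in (0:ℝ)..π, gfun (θ+π) := by
    apply intervalIntegral.integral_add (hmem 0 h0π π hππ)
    have h := (hmem π hππ (2*π) h2π).comp_add_right π
    rw [show π - π = 0 by ring, show 2*π - π = π by ring] at h
    exact h
  have hshift : ∫ θ in (0:ℝ)..π, gfun (θ+π) = ∫ u in π..(2*π), gfun u := by
    rw [intervalIntegral.integral_comp_add_right (a := 0) (b := π) gfun π, zero_add,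
      show π + π = 2*π by ring]
  have hglue : (∫ θ in (0:ℝ)..π, gfun θ) + ∫ u in π..(2*π), gfun u
      = ∫ u in (0:ℝ)..(2*π), gfun u :=
    intervalIntegral.integral_add_adjacent_intervals (hmem 0 h0π π hππ) (hmem π hππ (2*π) h2π)
  have : 2⁻¹ * ∫ u in (0:ℝ)..(2*π), gfun u = ∫ u in (0:ℝ)..(2*π), gfun u := by
    rw [← hsub, hae, hsplit, hshift, hglue]
  linarith

lemma case_small {x : ℝ} (hx : |x| ≤ 2) :
    ∫ θ in (0:ℝ)..π, Real.log |x - 2*Real.cos θ| = 0 := by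
  obtain ⟨hx1, hx2⟩ := abs_le.mp hx
  set φ := Real.arccos (x/2) with hφdef
  have hφ0 : 0 ≤ φ := Real.arccos_nonneg _
  have hφπ : φ ≤ π := Real.arccos_le_pi _
  have hcos : Real.cos φ = x/2 := Real.cos_arccos (by linarith) (by linarith)
  have hx2cos : x = 2 * Real.cos φ := by rw [hcos]; ring
  have hmem : ∀ c ∈ Icc (-π) (2*π), ∀ d ∈ Icc (-π) (2*π), IntervalIntegrable gfun volume c d :=
    fun c hc d hd => gfun_int_any hc hd
  have hπ := Real.pi_pos
  -- a.e. rewrite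
  have hae : ∫ θ in (0:ℝ)..π, Real.log |x - 2*Real.cos θ|
      = ∫ θ in (0:ℝ)..π, (gfun (θ - φ) + gfun (θ + φ)) / 2 := by
    apply intervalIntegral.integral_congr_ae
    have hnull : volume ({θ : ℝ | Real.cos (θ + -φ) = 1} ∪ {θ : ℝ | Real.cos (θ + φ) = 1}) = 0 :=
      measure_union_null (cos_shift_null (-φ)) (cos_shift_null φ)
    rw [← MeasureTheory.compl_mem_ae_iff] at hnull
    filter_upwards [hnull] with θ hθ _
    simp only [Set.mem_compl_iff, Set.mem_union, Set.mem_setOf_eq, not_or] at hθ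
    obtain ⟨h1, h2⟩ := hθ
    rw [show θ + -φ = θ - φ by ring] at h1
    have ha : (0:ℝ) < 2 - 2*Real.cos (θ - φ) :=
      lt_of_le_of_ne (by linarith [Real.cos_le_one (θ - φ)]) (by
        intro h; exact h1 (by linarith))
    have hb : (0:ℝ) < 2 - 2*Real.cos (θ + φ) :=
      lt_of_le_of_ne (by linarith [Real.cos_le_one (θ + φ)]) (by
        intro h; exact h2 (by linarith))
    have hprod : (x - 2*Real.cos θ)^2
        = (2 - 2*Real.cos (θ - φ)) * (2 - 2*Real.cos (θ + φ)) := by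
      rw [hx2cos, Real.cos_sub, Real.cos_add]
      linear_combination (4*Real.sin φ^2) * (Real.sin_sq_add_cos_sq θ)
        + (4 - 4*Real.cos θ^2) * (Real.sin_sq_add_cos_sq φ)
    have hlog2 : Real.log ((x - 2*Real.cos θ)^2) = gfun (θ - φ) + gfun (θ + φ) := by
      rw [hprod]
      unfold gfun
      rw [Real.log_mul ha.ne' hb.ne']
    have habs : Real.log ((x - 2*Real.cos θ)^2) = 2 * Real.log |x - 2*Real.cos θ| := by
      rw [← sq_abs, Real.log_pow]
      norm_num
    rw [habs] at hlog2
    linarith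
  rw [hae]
  have hint1 : IntervalIntegrable (fun θ => gfun (θ - φ)) volume 0 π := by
    have h := (hmem (-φ) ⟨by linarith, by linarith⟩ (π - φ) ⟨by linarith, by linarith⟩).comp_sub_right φ
    rw [show -φ + φ = 0 by ring, show π - φ + φ = π by ring] at h
    exact h
  have hint2 : IntervalIntegrable (fun θ => gfun (θ + φ)) volume 0 π := by
    have h := (hmem φ ⟨by linarith, by linarith⟩ (π + φ) ⟨by linarith, by linarith⟩).comp_add_right φ
    rw [show φ - φ = 0 by ring, show π + φ - φ = π by ring] at h
    exact h
  have hsplit : ∫ θ in (0:ℝ)..π, (gfun (θ - φ) + gfun (θ + φ)) / 2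
      = ((∫ θ in (0:ℝ)..π, gfun (θ - φ)) + ∫ θ in (0:ℝ)..π, gfun (θ + φ)) / 2 := by
    rw [← intervalIntegral.integral_add hint1 hint2]
    rw [show (fun θ => (gfun (θ - φ) + gfun (θ + φ)) / 2) = fun θ => (2⁻¹ : ℝ) * (gfun (θ - φ) + gfun (θ + φ)) from funext fun θ => by ring]
    rw [intervalIntegral.integral_const_mul]
    ring
  rw [hsplit]
  -- compute the two integrals
  have hI1 : ∫ θ in (0:ℝ)..π, gfun (θ - φ) = ∫ u in (-φ)..(π - φ), gfun u := by
    rw [intervalIntegral.integral_comp_sub_right gfun φ, zero_sub]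
  have hI2 : ∫ θ in (0:ℝ)..π, gfun (θ + φ) = ∫ u in (π - φ)..(2*π - φ), gfun u := by
    rw [intervalIntegral.integral_comp_add_right gfun φ, zero_add]
    -- now : ∫ u in φ..(π+φ), gfun u = ∫ u in (π-φ)..(2π-φ), gfun u
    have hrefl : ∫ u in (π - φ)..(2*π - φ), gfun u
        = ∫ u in (π - φ)..(2*π - φ), gfun (2*π - u) := by
      apply intervalIntegral.integral_congr
      intro u _
      show gfun u = gfun (2*π - u)
      rw [show 2*π - u = -(u - 2*π) by ring, gfun_even]
      exact (gfun_periodic.sub_eq u).symm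
    rw [hrefl, intervalIntegral.integral_comp_sub_left gfun (2*π),
      show 2*π - (2*π - φ) = φ by ring, show 2*π - (π - φ) = π + φ by ring]
  rw [hI1, hI2]
  have hglue : (∫ u in (-φ)..(π - φ), gfun u) + ∫ u in (π - φ)..(2*π - φ), gfun u
      = ∫ u in (-φ)..(2*π - φ), gfun u :=
    intervalIntegral.integral_add_adjacent_intervals
      (hmem (-φ) ⟨by linarith, by linarith⟩ (π - φ) ⟨by linarith, by linarith⟩)
      (hmem (π - φ) ⟨by linarith, by linarith⟩ (2*π - φ) ⟨by linarith, by linarith⟩)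
  rw [hglue]
  have hper : ∫ u in (-φ)..(2*π - φ), gfun u = ∫ u in (0:ℝ)..(2*π), gfun u := by
    have h := gfun_periodic.intervalIntegral_add_eq (-φ) 0
    rw [show -φ + 2*π = 2*π - φ by ring, zero_add] at h
    exact h
  rw [hper, integral_gfun_two_pi]
  norm_num

lemma case_big {x : ℝ} (hx : 2 < x) :
    ∫ θ in (0:ℝ)..π, Real.log |x - 2*Real.cos θ|
      = π * Real.log ((x + Real.sqrt (x^2 - 4)) / 2) := by
  set t := Real.sqrt (x^2 - 4) with ht
  have hx0 : (0:ℝ) < x := by linarith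
  have ht2 : t^2 = x^2 - 4 := Real.sq_sqrt (by nlinarith)
  have ht0 : 0 ≤ t := Real.sqrt_nonneg _
  set r := (x + t) / 2 with hr
  have hr1 : 1 < r := by
    rw [hr]
    nlinarith
  have hr0 : (0:ℝ) < r := by linarith
  have hrx : r^2 + 1 = x * r := by
    rw [hr]
    nlinarith [ht2]
  set s := 1/r with hs
  have hs01 : |s| < 1 := by
    rw [hs, abs_of_pos (by positivity)]
    rw [div_lt_one hr0]
    exact hr1
  have hpt : ∀ θ, Real.log |x - 2*Real.cos θ|
      = Real.log r + Real.log (1 - 2*s*Real.cos θ + s^2) := by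
    intro θ
    have hxc : 0 < x - 2*Real.cos θ := by
      have := Real.cos_le_one θ
      linarith
    have hquad := quad_pos hs01 θ
    have hid : x - 2*Real.cos θ = r * (1 - 2*s*Real.cos θ + s^2) := by
      rw [hs]
      field_simp
      nlinarith [hrx]
    rw [Real.log_abs, hid, Real.log_mul hr0.ne' hquad.ne']
  have hre : ∫ θ in (0:ℝ)..π, Real.log |x - 2*Real.cos θ|
      = ∫ θ in (0:ℝ)..π, (Real.log r + Real.log (1 - 2*s*Real.cos θ + s^2)) := by
    apply intervalIntegral.integral_congr
    intro θ _
    exact hpt θ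
  have hcont : IntervalIntegrable (fun θ => Real.log (1 - 2*s*Real.cos θ + s^2)) volume 0 π := by
    apply Continuous.intervalIntegrable
    exact ((continuous_const.sub (continuous_const.mul Real.continuous_cos)).add
      continuous_const).log (fun θ => (quad_pos hs01 θ).ne')
  rw [hre, intervalIntegral.integral_add (intervalIntegrable_const) hcont,
    intervalIntegral.integral_const, J_small hs01]
  simp only [sub_zero, smul_eq_mul, add_zero]

lemma arcsine_integral (f : ℝ → ℝ) :
    ∫ y, f y ∂arcsineLaw = (1/π) * ∫ θ in (0:ℝ)..π, f (2*Real.cos θ) := by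
  have hπ := Real.pi_pos
  set d : ℝ → ℝ := fun y => 1 / (π * Real.sqrt (4 - y ^ 2)) with hd
  have hdnn : ∀ y, 0 ≤ d y := fun y => by
    rw [hd]; positivity
  have hdc : Continuous fun y : ℝ => π * Real.sqrt (4 - y ^ 2) :=
    continuous_const.mul ((continuous_const.sub (continuous_pow 2)).sqrt)
  have hmeas : Measurable fun y => (d y).toNNReal := by
    apply Measurable.real_toNNReal
    simp only [hd, one_div]
    exact hdc.measurable.inv
  have h1 : ∫ y, f y ∂arcsineLaw
      = ∫ y in Icc (-2:ℝ) 2, ((d y).toNNReal : ℝ) • f y := by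
    rw [arcsineLaw]
    exact integral_withDensity_eq_integral_smul hmeas f
  have h2 : ∀ y, ((d y).toNNReal : ℝ) • f y = d y * f y := by
    intro y
    rw [smul_eq_mul, Real.coe_toNNReal _ (hdnn y)]
  simp only [h2] at h1
  rw [h1, MeasureTheory.integral_Icc_eq_integral_Ioo]
  -- change of variables y = 2 cos θ
  have himg : (fun θ => 2*Real.cos θ) '' Ioo 0 π = Ioo (-2:ℝ) 2 := by
    ext y
    constructor
    · rintro ⟨θ, hθ, rfl⟩
      have hc1 : Real.cos θ < 1 := by
        have := Real.strictAntiOn_cos (left_mem_Icc.mpr hπ.le)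
          ⟨hθ.1.le, hθ.2.le⟩ hθ.1
        rwa [Real.cos_zero] at this
      have hc2 : -1 < Real.cos θ := by
        have := Real.strictAntiOn_cos ⟨hθ.1.le, hθ.2.le⟩
          (right_mem_Icc.mpr hπ.le) hθ.2
        rwa [Real.cos_pi] at this
      exact ⟨show -2 < 2*Real.cos θ by linarith, show 2*Real.cos θ < 2 by linarith⟩
    · intro hy
      refine ⟨Real.arccos (y/2), ⟨?_, ?_⟩, ?_⟩
      · exact Real.arccos_pos.mpr (by linarith [hy.2])
      · apply lt_of_le_of_ne (Real.arccos_le_pi (y/2))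
        intro he
        have hc := Real.cos_arccos (by linarith [hy.1] : -1 ≤ y/2) (by linarith [hy.2] : y/2 ≤ 1)
        rw [he, Real.cos_pi] at hc
        linarith [hy.1]
      · show 2 * Real.cos (Real.arccos (y/2)) = y
        rw [Real.cos_arccos (by linarith [hy.1] : -1 ≤ y/2) (by linarith [hy.2] : y/2 ≤ 1)]
        ring
  have hder : ∀ θ ∈ Ioo (0:ℝ) π,
      HasDerivWithinAt (fun θ => 2*Real.cos θ) (2 * (-Real.sin θ)) (Ioo (0:ℝ) π) θ :=
    fun θ _ => ((Real.hasDerivAt_cos θ).const_mul 2).hasDerivWithinAt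
  have hinj : InjOn (fun θ => 2*Real.cos θ) (Ioo (0:ℝ) π) := by
    intro a ha b hb hab
    exact Real.injOn_cos (Ioo_subset_Icc_self ha) (Ioo_subset_Icc_self hb) (by
      simp only at hab; linarith)
  rw [← himg, MeasureTheory.integral_image_eq_integral_abs_deriv_smul
    measurableSet_Ioo hder hinj (fun y => d y * f y)]
  have hcongr : ∫ θ in Ioo (0:ℝ) π, |2 * (-Real.sin θ)| • (d (2*Real.cos θ) * f (2*Real.cos θ))
      = ∫ θ in Ioo (0:ℝ) π, (1/π) * f (2*Real.cos θ) := by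
    apply setIntegral_congr_fun measurableSet_Ioo
    intro θ hθ
    have hsin : 0 < Real.sin θ := Real.sin_pos_of_pos_of_lt_pi hθ.1 hθ.2
    have hsq : Real.sqrt (4 - (2*Real.cos θ)^2) = 2 * Real.sin θ := by
      rw [show 4 - (2*Real.cos θ)^2 = (2*Real.sin θ)^2 by
        nlinarith [Real.sin_sq_add_cos_sq θ]]
      exact Real.sqrt_sq (by positivity)
    simp only [hd, hsq, smul_eq_mul, abs_mul, abs_neg, abs_of_pos hsin]
    rw [abs_of_pos (by norm_num : (0:ℝ) < 2)]
    field_simp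
  rw [hcongr, MeasureTheory.integral_const_mul, ← MeasureTheory.integral_Ioc_eq_integral_Ioo,
    ← intervalIntegral.integral_of_le hπ.le]

/-- The logarithmic potential of the arcsine law: `∫ log |x-y| β(dy)` vanishes on
`[-2,2]` and equals `log((|x| + √(x²-4))/2)` outside. -/
theorem arcsine_log_potential (x : ℝ) :
    ∫ y, Real.log |x - y| ∂arcsineLaw =
      if |x| ≤ 2 then 0 else Real.log ((|x| + Real.sqrt (x ^ 2 - 4)) / 2) := by
  have hπ := Real.pi_pos
  rw [arcsine_integral (fun y => Real.log |x - y|)]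
  by_cases hx : |x| ≤ 2
  · rw [if_pos hx]
    rw [show (∫ θ in (0:ℝ)..π, Real.log |x - 2*Real.cos θ|) = 0 from case_small hx]
    ring
  · rw [if_neg hx]
    push_neg at hx
    rcases lt_or_ge x 0 with hneg | hpos
    · have hx2 : 2 < -x := by
        rw [abs_of_neg hneg] at hx; exact hx
      have hflip : (∫ θ in (0:ℝ)..π, Real.log |x - 2*Real.cos θ|)
          = ∫ θ in (0:ℝ)..π, Real.log |(-x) - 2*Real.cos θ| := by
        have h := intervalIntegral.integral_comp_sub_left (a := (0:ℝ)) (b := π)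
          (fun θ => Real.log |(-x) - 2*Real.cos θ|) π
        rw [sub_zero, sub_self] at h
        rw [← h]
        apply intervalIntegral.integral_congr
        intro θ _
        simp only
        rw [Real.cos_pi_sub]
        congr 1
        rw [show -x - 2 * -Real.cos θ = -(x - 2*Real.cos θ) by ring, abs_neg]
      rw [hflip, show (∫ θ in (0:ℝ)..π, Real.log |(-x) - 2*Real.cos θ|)
          = π * Real.log ((-x + Real.sqrt ((-x)^2 - 4)) / 2) from case_big hx2]
      rw [show ((-x:ℝ)^2 - 4) = x^2 - 4 by ring, abs_of_neg hneg]
      field_simp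
    · have hx2 : 2 < x := by rwa [abs_of_nonneg hpos] at hx
      rw [show (∫ θ in (0:ℝ)..π, Real.log |x - 2*Real.cos θ|)
          = π * Real.log ((x + Real.sqrt (x^2 - 4)) / 2) from case_big hx2]
      rw [abs_of_nonneg hpos]
      field_simp
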